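/- Let μ be a partition, let p = (l_w, l_b) be a wb pair in x_μ whose flip yields x_λ for a partition λ, and let γ = μ/λ be the corresponding rim hook. Then p is an arrow pair (it satisfies the hw-condition and the d-condition) if and only if γ belongs to Γ₀ (it satisfies the HW-condition and the D-condition). -/

import Mathlib

open Finset

/-- The content of a box in position `(i, j)` is `j - i`. -/
def content (b : ℕ × ℕ) : ℤ := (b.2 : ℤ) - (b.1 : ℤ)

/-- The anticontent of a box in position `(i, j)` is `i + j`. -/
def anticontent (b : ℕ × ℕ) : ℤ := (b.1 : ℤ) + (b.2 : ℤ)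

/-- Two boxes are adjacent if they share a side. -/
def BoxAdj (a b : ℕ × ℕ) : Prop :=
  (a.1 = b.1 ∧ (a.2 + 1 = b.2 ∨ b.2 + 1 = a.2)) ∨
  (a.2 = b.2 ∧ (a.1 + 1 = b.1 ∨ b.1 + 1 = a.1))

/-- A finite set of boxes is connected if any two boxes are linked by a chain of
adjacent boxes inside the set. -/
def IsConnectedBoxes (S : Finset (ℕ × ℕ)) : Prop :=
  ∀ a ∈ S, ∀ b ∈ S,
    Relation.ReflTransGen (fun x y => x ∈ S ∧ y ∈ S ∧ BoxAdj x y) a b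

/-- A skew Young diagram: the difference of two Young diagrams `l ⊆ m`. -/
def IsSkew (S : Finset (ℕ × ℕ)) : Prop :=
  ∃ l m : YoungDiagram, l ≤ m ∧ S = m.cells \ l.cells

/-- A hook: a nonempty connected skew Young diagram with no two boxes of the same content. -/
def IsHook (S : Finset (ℕ × ℕ)) : Prop :=
  IsSkew S ∧ S.Nonempty ∧ IsConnectedBoxes S ∧
    ∀ a ∈ S, ∀ b ∈ S, content a = content b → a = b

/-- Height: number of rows occupied. -/
def ht (S : Finset (ℕ × ℕ)) : ℕ := (S.image Prod.fst).card

/-- Width: number of columns occupied. -/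
def wd (S : Finset (ℕ × ℕ)) : ℕ := (S.image Prod.snd).card

/-- The D-condition: the anticontent of the box of minimal content is minimal
among the anticontents of all boxes (no box strictly above the diagonal through
the minimal box). -/
def DCond (S : Finset (ℕ × ℕ)) : Prop :=
  ∀ m ∈ S, (∀ c ∈ S, content m ≤ content c) →
    ∀ b ∈ S, anticontent m ≤ anticontent b

/-- `Γ₀`: connected hooks satisfying the HW-condition and the D-condition. -/
def InGammaZero (γ : Finset (ℕ × ℕ)) : Prop :=
  IsHook γ ∧ wd γ = ht γ + 1 ∧ DCond γ

/-- The sequence `x_λ = (λ₁, λ₂ − 1, λ₃ − 2, …)` (indexed from `0`). -/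
def xseq (μ : YoungDiagram) (k : ℕ) : ℤ := (μ.rowLen k : ℤ) - (k : ℤ)

/-- `lam` is obtained from `μ` by flipping the wb pair `(lw, lb)`:
`lw < lb`, `lw` is white and `lb` is black in `x_μ`, and the black set of
`x_lam` is that of `x_μ` with `lb` replaced by `lw`. -/
def IsFlip (μ lam : YoungDiagram) (lw lb : ℤ) : Prop :=
  lw < lb ∧ lw ∉ Set.range (xseq μ) ∧ lb ∈ Set.range (xseq μ) ∧
    Set.range (xseq lam) = insert lw (Set.range (xseq μ) \ {lb})

/-- The number of black dots of `x_μ` in the interval `[a, b]`. -/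
noncomputable def blackCount (μ : YoungDiagram) (a b : ℤ) : ℕ :=
  Nat.card {n : ℤ // n ∈ Set.Icc a b ∧ n ∈ Set.range (xseq μ)}

/-- The number of white dots of `x_μ` in the interval `[a, b]`. -/
noncomputable def whiteCount (μ : YoungDiagram) (a b : ℤ) : ℕ :=
  Nat.card {n : ℤ // n ∈ Set.Icc a b ∧ n ∉ Set.range (xseq μ)}

/-- An arrow pair of `x_μ`: a wb pair `(lw, lb)` such that (hw-condition) the
interval `[lw, lb]` contains exactly one more white than black dot, and
(d-condition) no interval `(lw, m]` with `m < lb` contains fewer white than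
black dots. -/
def ArrowPair (μ : YoungDiagram) (lw lb : ℤ) : Prop :=
  lw < lb ∧ lw ∉ Set.range (xseq μ) ∧ lb ∈ Set.range (xseq μ) ∧
    whiteCount μ lw lb = blackCount μ lw lb + 1 ∧
    ∀ m : ℤ, lw < m → m < lb → blackCount μ (lw + 1) m ≤ whiteCount μ (lw + 1) m

lemma xseq_strictAnti (μ : YoungDiagram) : StrictAnti (xseq μ) := by
  intro a b hab
  have h1 : μ.rowLen b ≤ μ.rowLen a := μ.rowLen_anti a b hab.le
  simp only [xseq]
  omega

lemma strictAnti_le_sub {f : ℕ → ℤ} (hf : StrictAnti f) (n : ℕ) : f n ≤ f 0 - n := by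
  induction n with
  | zero => simp
  | succ m ih =>
    have h := hf (Nat.lt_succ_self m)
    rw [Nat.succ_eq_add_one] at *
    push_cast
    omega

lemma strictAnti_eq_of_range_eq {f g : ℕ → ℤ} (hf : StrictAnti f) (hg : StrictAnti g)
    (h : Set.range f = Set.range g) : f = g := by
  have key : ∀ n, (∀ m, m < n → f m = g m) → f n = g n := by
    intro n ih
    have h1 : f n ∈ Set.range g := h ▸ Set.mem_range_self n
    obtain ⟨m, hm⟩ := h1
    rcases lt_trichotomy m n with hmn | rfl | hnm
    · exact absurd (hm ▸ (ih m hmn).symm ▸ rfl : f m = f n) (hf hmn).ne'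
    · exact hm.symm
    · exfalso
      have h2 : g n ∈ Set.range f := h.symm ▸ Set.mem_range_self n
      obtain ⟨j, hj⟩ := h2
      have hgnm : g m < g n := hg hnm
      have hfj : f n < f j := by rw [hj, ← hm]; exact hgnm
      have hjn : j < n := by
        by_contra hc
        exact absurd hfj (not_lt.mpr (hf.antitone (not_lt.mp hc)))
      have h3 := ih j hjn
      have h4 : g j = g n := by rw [← h3, hj]
      exact absurd (hg.injective h4) (Nat.ne_of_lt hjn)
  funext n
  induction n using Nat.strong_induction_on with
  | _ n ih => exact key n ih


lemma natCard_count (a b : ℤ) (P : ℤ → Prop) [DecidablePred P] :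
    Nat.card {n : ℤ // n ∈ Set.Icc a b ∧ P n} = ((Finset.Icc a b).filter P).card := by
  have h1 : {n : ℤ | n ∈ Set.Icc a b ∧ P n} = ↑((Finset.Icc a b).filter P) := by
    ext n; simp
  rw [show {n : ℤ // n ∈ Set.Icc a b ∧ P n} = ↥{n : ℤ | n ∈ Set.Icc a b ∧ P n} from rfl,
    Nat.card_coe_set_eq, h1, Set.ncard_coe_finset]

open Classical in
lemma blackCount_eq (μ : YoungDiagram) (a b : ℤ) :
    blackCount μ a b = ((Finset.Icc a b).filter (· ∈ Set.range (xseq μ))).card :=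
  natCard_count a b _

open Classical in
lemma whiteCount_eq (μ : YoungDiagram) (a b : ℤ) :
    whiteCount μ a b = ((Finset.Icc a b).filter (· ∉ Set.range (xseq μ))).card := by
  rw [whiteCount, natCard_count a b _]


open Classical in
lemma white_add_black (μ : YoungDiagram) (a b : ℤ) :
    whiteCount μ a b + blackCount μ a b = (b + 1 - a).toNat := by
  rw [whiteCount_eq, blackCount_eq, add_comm]
  rw [Finset.card_filter_add_card_filter_not]
  exact Int.card_Icc a b


lemma rowLen_cast (μ : YoungDiagram) (i : ℕ) : (μ.rowLen i : ℤ) = xseq μ i + i := by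
  simp [xseq]


set_option linter.unusedSectionVars false
section Main
variable {μ lam : YoungDiagram} {lw lb : ℤ} {k k' : ℕ}

variable (H1 : k ≤ k') (H2 : xseq μ k = lb) (H3 : ∀ j, j ≤ k' → lw < xseq μ j)
  (H4 : xseq μ (k'+1) < lw) (H5 : ∀ i, k ≤ i → i < k' → xseq lam i = xseq μ (i+1))
  (H6 : xseq lam k' = lw) (H7 : ∀ i, i < k ∨ k' < i → xseq lam i = xseq μ i)

include H1 H2 H3 H4 H5 H6 H7

lemma hylt : ∀ i, k ≤ i → i ≤ k' → xseq lam i < xseq μ i := by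
  intro i h1 h2
  rcases lt_or_eq_of_le h2 with h | rfl
  · rw [H5 i h1 h]
    exact (xseq_strictAnti μ) (Nat.lt_succ_self i)
  · rw [H6]; exact H3 i le_rfl

lemma mem_strip : ∀ i j : ℕ, (i, j) ∈ μ.cells \ lam.cells ↔
    (k ≤ i ∧ i ≤ k' ∧ xseq lam i + i ≤ (j:ℤ) ∧ (j:ℤ) < xseq μ i + i) := by
  intro i j
  rw [Finset.mem_sdiff, YoungDiagram.mem_cells, YoungDiagram.mem_cells,
    YoungDiagram.mem_iff_lt_rowLen, YoungDiagram.mem_iff_lt_rowLen]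
  have hμ := rowLen_cast μ i
  have hlam := rowLen_cast lam i
  constructor
  · rintro ⟨h1, h2⟩
    have h2' : lam.rowLen i ≤ j := not_lt.mp h2
    have hb1 : (j:ℤ) < xseq μ i + i := by rw [← hμ]; exact_mod_cast h1
    have hb2 : xseq lam i + i ≤ (j:ℤ) := by rw [← hlam]; exact_mod_cast h2'
    have hne : ¬ (i < k ∨ k' < i) := by
      intro hc
      rw [H7 i hc] at hb2
      omega
    exact ⟨by omega, by omega, hb2, hb1⟩
  · rintro ⟨h1, h2, h3, h4⟩
    constructor
    · have : (j:ℤ) < μ.rowLen i := by omega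
      exact_mod_cast this
    · have : (lam.rowLen i : ℤ) ≤ j := by omega
      intro hc
      have : (j:ℤ) < lam.rowLen i := by exact_mod_cast hc
      omega

lemma uniq_aux : ∀ i1 j1 i2 j2 : ℕ, (i1, j1) ∈ μ.cells \ lam.cells →
    (i2, j2) ∈ μ.cells \ lam.cells → (j1:ℤ) - i1 = (j2:ℤ) - i2 → i1 < i2 → False := by
  intro i1 j1 i2 j2 hm1 hm2 hc hlt'
  rw [mem_strip H1 H2 H3 H4 H5 H6 H7] at hm1 hm2
  have h5 : xseq lam i1 = xseq μ (i1+1) := H5 i1 hm1.1 (lt_of_lt_of_le hlt' hm2.2.1)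
  have h6 : xseq μ i2 ≤ xseq μ (i1+1) := (xseq_strictAnti μ).antitone hlt'
  omega

lemma uniq_content : ∀ p q : ℕ × ℕ, p ∈ μ.cells \ lam.cells → q ∈ μ.cells \ lam.cells →
    (p.2:ℤ) - p.1 = (q.2:ℤ) - q.1 → p = q := by
  rintro ⟨i1, j1⟩ ⟨i2, j2⟩ hm1 hm2 hc
  rcases lt_trichotomy i1 i2 with h | h | h
  · exact absurd (uniq_aux H1 H2 H3 H4 H5 H6 H7 i1 j1 i2 j2 hm1 hm2 hc h) not_false
  · simp only [h, Prod.mk.injEq, true_and]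
    subst h; omega
  · exact absurd (uniq_aux H1 H2 H3 H4 H5 H6 H7 i2 j2 i1 j1 hm2 hm1 hc.symm h) not_false

lemma cover_content : ∀ c : ℤ, lw ≤ c → c < lb → ∃ i j : ℕ, (i, j) ∈ μ.cells \ lam.cells ∧ (j:ℤ) - i = c := by
  have main : ∀ i, k ≤ i → i ≤ k' → ∀ c : ℤ, xseq lam i ≤ c → c < lb →
      ∃ i' j : ℕ, (i', j) ∈ μ.cells \ lam.cells ∧ (j:ℤ) - i' = c := by
    intro i hki
    induction i, hki using Nat.le_induction with
    | base =>
      intro _ c hc1 hc2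
      have hnn : (0:ℤ) ≤ xseq lam k + k := by
        have := rowLen_cast lam k; omega
      refine ⟨k, (c + k).toNat, ?_, ?_⟩
      · rw [mem_strip H1 H2 H3 H4 H5 H6 H7]
        refine ⟨le_rfl, H1, ?_, ?_⟩ <;> rw [Int.toNat_of_nonneg (by omega)] <;> omega
      · rw [Int.toNat_of_nonneg (by omega)]; ring
    | succ i hki ih =>
      intro h1 c hc1 hc2
      by_cases hcy : xseq lam i ≤ c
      · exact ih (by omega) c hcy hc2
      · push_neg at hcy
        have h5 : xseq lam i = xseq μ (i+1) := H5 i hki (by omega)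
        have hnn : (0:ℤ) ≤ xseq lam (i+1) + ((i:ℤ)+1) := by
          have := rowLen_cast lam (i+1); push_cast at this ⊢; omega
        refine ⟨i+1, (c + (i+1)).toNat, ?_, ?_⟩
        · rw [mem_strip H1 H2 H3 H4 H5 H6 H7]
          refine ⟨by omega, h1, ?_, ?_⟩ <;> rw [Int.toNat_of_nonneg (by omega)] <;> push_cast <;> omega
        · rw [Int.toNat_of_nonneg (by omega)]; push_cast; ring
  intro c hc1 hc2
  exact main k' H1 le_rfl c (by omega) hc2

lemma cover_column : ∀ j : ℕ, xseq lam k' + k' ≤ (j:ℤ) → (j:ℤ) < xseq μ k + k →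
    ∃ i : ℕ, (i, j) ∈ μ.cells \ lam.cells := by
  have main : ∀ i, k ≤ i → i ≤ k' → ∀ j : ℕ, xseq lam i + i ≤ (j:ℤ) → (j:ℤ) < xseq μ k + k →
      ∃ i' : ℕ, (i', j) ∈ μ.cells \ lam.cells := by
    intro i hki
    induction i, hki using Nat.le_induction with
    | base =>
      intro _ j hj1 hj2
      exact ⟨k, by rw [mem_strip H1 H2 H3 H4 H5 H6 H7]; exact ⟨le_rfl, H1, hj1, hj2⟩⟩
    | succ i hki ih =>
      intro h1 j hj1 hj2
      by_cases hcy : xseq lam i + i ≤ (j:ℤ)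
      · exact ih (by omega) j hcy hj2
      · push_neg at hcy
        have h5 : xseq lam i = xseq μ (i+1) := H5 i hki (by omega)
        refine ⟨i+1, ?_⟩
        rw [mem_strip H1 H2 H3 H4 H5 H6 H7]
        refine ⟨by omega, h1, hj1, by push_cast; push_cast at hj1 hcy; omega⟩
  intro j hj1 hj2
  exact main k' H1 le_rfl j hj1 hj2


lemma hx_le : ∀ j, xseq μ j ≤ lb ↔ k ≤ j := by
  intro j
  rw [← H2]
  exact (xseq_strictAnti μ).le_iff_ge

lemma hx_ge : ∀ j, lw ≤ xseq μ j ↔ j ≤ k' := by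
  intro j
  constructor
  · intro hj
    by_contra hc
    have : xseq μ j ≤ xseq μ (k'+1) := (xseq_strictAnti μ).antitone (by omega)
    omega
  · intro hj
    exact (H3 j hj).le

lemma black_general (a c : ℤ) (i0 : ℕ) (hiff : ∀ j, (a ≤ xseq μ j ∧ xseq μ j ≤ c) ↔ (i0 ≤ j ∧ j ≤ k')) :
    blackCount μ a c = k' + 1 - i0 := by
  classical
  rw [blackCount_eq]
  have himg : (Finset.Icc a c).filter (· ∈ Set.range (xseq μ)) = (Finset.Icc i0 k').image (xseq μ) := by
    ext n
    simp only [Finset.mem_filter, Finset.mem_Icc, Finset.mem_image, Set.mem_range]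
    constructor
    · rintro ⟨⟨hn1, hn2⟩, j, rfl⟩
      exact ⟨j, (hiff j).mp ⟨hn1, hn2⟩, rfl⟩
    · rintro ⟨j, hj, rfl⟩
      exact ⟨(hiff j).mpr hj, j, rfl⟩
  rw [himg, Finset.card_image_of_injective _ (xseq_strictAnti μ).injective, Nat.card_Icc]

lemma black_full : blackCount μ lw lb = k' + 1 - k := by
  refine black_general H1 H2 H3 H4 H5 H6 H7 lw lb k (fun j => ?_)
  rw [hx_le H1 H2 H3 H4 H5 H6 H7, hx_ge H1 H2 H3 H4 H5 H6 H7]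
  tauto

lemma black_row (i : ℕ) (c : ℤ) (hik : k ≤ i) (hik' : i ≤ k') (hc1 : xseq lam i ≤ c)
    (hc2 : c < xseq μ i) : blackCount μ (lw+1) c = k' - i := by
  have := black_general H1 H2 H3 H4 H5 H6 H7 (lw+1) c (i+1) (fun j => ?_)
  · omega
  constructor
  · rintro ⟨hj1, hj2⟩
    have hjk' : j ≤ k' := (hx_ge H1 H2 H3 H4 H5 H6 H7 j).mp (by omega)
    refine ⟨?_, hjk'⟩
    by_contra hc
    have : xseq μ i ≤ xseq μ j := (xseq_strictAnti μ).antitone (by omega)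
    omega
  · rintro ⟨hj1, hj2⟩
    have hxi1 : xseq μ j ≤ xseq μ (i+1) := (xseq_strictAnti μ).antitone hj1
    have hik2 : i < k' := by omega
    have h5 := H5 i hik hik2
    exact ⟨by have := H3 j hj2; omega, by omega⟩

lemma white_row (i : ℕ) (c : ℤ) (hik : k ≤ i) (hik' : i ≤ k') (hc1 : xseq lam i ≤ c)
    (hc2 : c < xseq μ i) :
    (whiteCount μ (lw+1) c : ℤ) = (c - lw) - (k' - i) ∧ ((k' : ℤ) - i) ≤ c - lw := by
  have hb := black_row H1 H2 H3 H4 H5 H6 H7 i c hik hik' hc1 hc2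
  have hs := white_add_black μ (lw+1) c
  have hlwc : lw ≤ c := by
    have h := (xseq_strictAnti lam).antitone hik'
    rw [H6] at h
    omega
  rw [hb] at hs
  have h1 : (c + 1 - (lw+1)).toNat = (c - lw).toNat := by omega
  rw [h1] at hs
  omega

lemma ht_eq : ht (μ.cells \ lam.cells) = k' + 1 - k := by
  have himg : (μ.cells \ lam.cells).image Prod.fst = Finset.Icc k k' := by
    ext i
    simp only [Finset.mem_image, Finset.mem_Icc]
    constructor
    · rintro ⟨⟨i', j⟩, hp, rfl⟩
      have := (mem_strip H1 H2 H3 H4 H5 H6 H7 i' j).mp hp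
      exact ⟨this.1, this.2.1⟩
    · rintro ⟨h1, h2⟩
      refine ⟨(i, lam.rowLen i), ?_, rfl⟩
      rw [mem_strip H1 H2 H3 H4 H5 H6 H7]
      have hc := rowLen_cast lam i
      have hy := hylt H1 H2 H3 H4 H5 H6 H7 i h1 h2
      exact ⟨h1, h2, by omega, by omega⟩
  rw [ht, himg, Nat.card_Icc]

lemma wd_eq : wd (μ.cells \ lam.cells) = μ.rowLen k - lam.rowLen k' := by
  have himg : (μ.cells \ lam.cells).image Prod.snd = Finset.Ico (lam.rowLen k') (μ.rowLen k) := by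
    ext j
    simp only [Finset.mem_image, Finset.mem_Ico]
    constructor
    · rintro ⟨⟨i, j'⟩, hp, rfl⟩
      have hm := (mem_strip H1 H2 H3 H4 H5 H6 H7 i j').mp hp
      have hL : lam.rowLen k' ≤ lam.rowLen i := lam.rowLen_anti i k' hm.2.1
      have hM : μ.rowLen i ≤ μ.rowLen k := μ.rowLen_anti k i hm.1
      have hc1 := rowLen_cast lam i
      have hc2 := rowLen_cast μ i
      have hc3 := rowLen_cast lam k'
      have hc4 := rowLen_cast μ k
      constructor
      · have : (lam.rowLen k' : ℤ) ≤ j' := by omega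
        exact_mod_cast this
      · have : (j' : ℤ) < μ.rowLen k := by omega
        exact_mod_cast this
    · rintro ⟨h1, h2⟩
      have hc3 := rowLen_cast lam k'
      have hc4 := rowLen_cast μ k
      obtain ⟨i, hi⟩ := cover_column H1 H2 H3 H4 H5 H6 H7 j
        (by have : (lam.rowLen k' : ℤ) ≤ j := by exact_mod_cast h1
            omega)
        (by have : (j : ℤ) < μ.rowLen k := by exact_mod_cast h2
            omega)
      exact ⟨(i, j), hi, rfl⟩
  rw [wd, himg, Nat.card_Ico]

lemma hyle : ∀ i, xseq lam i ≤ xseq μ i := by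
  intro i
  by_cases hc : i < k ∨ k' < i
  · rw [H7 i hc]
  · push_neg at hc
    exact (hylt H1 H2 H3 H4 H5 H6 H7 i hc.1 hc.2).le

lemma content_bds : ∀ p : ℕ × ℕ, p ∈ μ.cells \ lam.cells →
    lw ≤ (p.2:ℤ) - p.1 ∧ (p.2:ℤ) - p.1 < lb := by
  rintro ⟨i, j⟩ hp
  have hm := (mem_strip H1 H2 H3 H4 H5 H6 H7 i j).mp hp
  have h1 : xseq lam k' ≤ xseq lam i := (xseq_strictAnti lam).antitone hm.2.1
  have h2 : xseq μ i ≤ xseq μ k := (xseq_strictAnti μ).antitone hm.1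
  rw [H6] at h1
  constructor <;> omega

lemma adj_step : ∀ p q : ℕ × ℕ, p ∈ μ.cells \ lam.cells → q ∈ μ.cells \ lam.cells →
    (q.2:ℤ) - q.1 = (p.2:ℤ) - p.1 + 1 → BoxAdj p q := by
  rintro ⟨i, j⟩ ⟨i2, j2⟩ hp hq hc
  have hm := (mem_strip H1 H2 H3 H4 H5 H6 H7 i j).mp hp
  by_cases hlt' : (j:ℤ) + 1 < xseq μ i + i
  · have hmem : (i, j+1) ∈ μ.cells \ lam.cells := by
      rw [mem_strip H1 H2 H3 H4 H5 H6 H7]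
      refine ⟨hm.1, hm.2.1, by push_cast; omega, by push_cast; omega⟩
    have : (i2, j2) = (i, j+1) :=
      uniq_content H1 H2 H3 H4 H5 H6 H7 (i2, j2) (i, j+1) hq hmem (by push_cast; omega)
    rw [this]
    exact Or.inl ⟨rfl, Or.inl rfl⟩
  · have heq : (j:ℤ) + 1 = xseq μ i + i := by omega
    have hik : k < i := by
      rcases Nat.lt_or_ge k i with h | h
      · exact h
      · exfalso
        have hik2 : i = k := by omega
        have hqb := content_bds H1 H2 H3 H4 H5 H6 H7 (i2, j2) hq
        subst hik2
        simp only at hqb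
        omega
    obtain ⟨i', rfl⟩ : ∃ i', i = i' + 1 := ⟨i - 1, by omega⟩
    have h5 : xseq lam i' = xseq μ (i' + 1) := H5 i' (by omega) (by omega)
    have hmono : xseq μ (i'+1) < xseq μ i' := xseq_strictAnti μ (Nat.lt_succ_self i')
    have hmem : (i', j) ∈ μ.cells \ lam.cells := by
      rw [mem_strip H1 H2 H3 H4 H5 H6 H7]
      refine ⟨by omega, by omega, by push_cast at heq ⊢; omega, by push_cast at heq ⊢; omega⟩
    have : (i2, j2) = (i', j) :=
      uniq_content H1 H2 H3 H4 H5 H6 H7 (i2, j2) (i', j) hq hmem (by push_cast at hc ⊢; omega)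
    rw [this]
    exact Or.inr ⟨rfl, Or.inr rfl⟩

lemma chain_aux : ∀ n : ℕ, ∀ p q : ℕ × ℕ, p ∈ μ.cells \ lam.cells → q ∈ μ.cells \ lam.cells →
    (q.2:ℤ) - q.1 = (p.2:ℤ) - p.1 + n →
    Relation.ReflTransGen (fun x y => x ∈ μ.cells \ lam.cells ∧ y ∈ μ.cells \ lam.cells ∧ BoxAdj x y) p q := by
  intro n
  induction n with
  | zero =>
    intro p q hp hq hc
    have : p = q := uniq_content H1 H2 H3 H4 H5 H6 H7 p q hp hq (by push_cast at hc; omega)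
    rw [this]
  | succ n ih =>
    intro p q hp hq hc
    have hpb := content_bds H1 H2 H3 H4 H5 H6 H7 p hp
    have hqb := content_bds H1 H2 H3 H4 H5 H6 H7 q hq
    obtain ⟨i, j, hr, hrc⟩ := cover_content H1 H2 H3 H4 H5 H6 H7 ((p.2:ℤ) - p.1 + n)
      (by omega) (by push_cast at hc; omega)
    have hchain := ih p (i, j) hp hr (by rw [hrc])
    refine hchain.tail ⟨hr, hq, ?_⟩
    exact adj_step H1 H2 H3 H4 H5 H6 H7 (i, j) q hr hq (by push_cast at hc ⊢; omega)

omit H1 H2 H3 H4 H5 H6 H7 in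
lemma boxadj_symm : ∀ x y : ℕ × ℕ, BoxAdj x y → BoxAdj y x := by
  intro x y
  unfold BoxAdj
  omega

lemma connected_strip : IsConnectedBoxes (μ.cells \ lam.cells) := by
  intro a ha b hb
  have hsymm : Symmetric (fun x y => x ∈ μ.cells \ lam.cells ∧ y ∈ μ.cells \ lam.cells ∧ BoxAdj x y) := by
    rintro x y ⟨h1, h2, h3⟩
    exact ⟨h2, h1, boxadj_symm x y h3⟩
  rcases le_total ((a.2:ℤ) - a.1) ((b.2:ℤ) - b.1) with hab | hab
  · refine chain_aux H1 H2 H3 H4 H5 H6 H7 ((b.2:ℤ) - b.1 - ((a.2:ℤ) - a.1)).toNat a b ha hb ?_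
    omega
  · exact ((@Relation.ReflTransGen.symmetric _ _ ⟨fun _ _ h => hsymm h⟩).symm _ _)
      (chain_aux H1 H2 H3 H4 H5 H6 H7 ((a.2:ℤ) - a.1 - ((b.2:ℤ) - b.1)).toNat b a hb ha (by omega))

lemma hook_strip : IsHook (μ.cells \ lam.cells) := by
  refine ⟨⟨lam, μ, ?_, rfl⟩, ?_, connected_strip H1 H2 H3 H4 H5 H6 H7, ?_⟩
  · rw [← YoungDiagram.cells_subset_iff]
    rintro ⟨i, j⟩ hij
    rw [YoungDiagram.mem_cells, YoungDiagram.mem_iff_lt_rowLen] at hij ⊢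
    have h1 := rowLen_cast lam i
    have h2 := rowLen_cast μ i
    have h3 := hyle H1 H2 H3 H4 H5 H6 H7 i
    omega
  · refine ⟨(k, lam.rowLen k), ?_⟩
    rw [mem_strip H1 H2 H3 H4 H5 H6 H7]
    have h1 := rowLen_cast lam k
    have h2 := hylt H1 H2 H3 H4 H5 H6 H7 k le_rfl H1
    exact ⟨le_rfl, H1, by omega, by omega⟩
  · intro a ha b hb hc
    exact uniq_content H1 H2 H3 H4 H5 H6 H7 a b ha hb hc

lemma m0_mem : (k', lam.rowLen k') ∈ μ.cells \ lam.cells := by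
  rw [mem_strip H1 H2 H3 H4 H5 H6 H7]
  have h1 := rowLen_cast lam k'
  have h2 := hylt H1 H2 H3 H4 H5 H6 H7 k' H1 le_rfl
  exact ⟨H1, le_rfl, by omega, by omega⟩

lemma row_of_lw : ∀ i j : ℕ, (i, j) ∈ μ.cells \ lam.cells → (j:ℤ) - i = lw → i = k' := by
  intro i j hij hc
  have hm := (mem_strip H1 H2 H3 H4 H5 H6 H7 i j).mp hij
  have h1 : xseq lam k' ≤ xseq lam i := (xseq_strictAnti lam).antitone hm.2.1
  have h2 : xseq lam i = xseq lam k' := by omega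
  exact (xseq_strictAnti lam).injective h2

lemma dcond_iff :
    (∀ m : ℤ, lw < m → m < lb → blackCount μ (lw + 1) m ≤ whiteCount μ (lw + 1) m) ↔
      DCond (μ.cells \ lam.cells) := by
  have hLk' := rowLen_cast lam k'
  constructor
  · intro hd m hm hmin b hb
    have hmb := content_bds H1 H2 H3 H4 H5 H6 H7 m hm
    have hm0 := m0_mem H1 H2 H3 H4 H5 H6 H7
    have hmlw : (m.2:ℤ) - m.1 = lw := by
      have := hmin (k', lam.rowLen k') hm0
      simp only [content] at this
      omega
    have hmk' : m.1 = k' := row_of_lw H1 H2 H3 H4 H5 H6 H7 m.1 m.2 (by rwa [Prod.mk.eta]) hmlw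
    have hanti_m : anticontent m = lw + 2 * (k' : ℤ) := by
      simp only [anticontent]
      omega
    obtain ⟨i, j⟩ := b
    have hmb2 := (mem_strip H1 H2 H3 H4 H5 H6 H7 i j).mp hb
    have hcb := content_bds H1 H2 H3 H4 H5 H6 H7 (i, j) hb
    simp only at hcb
    rcases eq_or_lt_of_le hcb.1 with hclw | hclw
    · have hik' : i = k' := row_of_lw H1 H2 H3 H4 H5 H6 H7 i j hb hclw.symm
      simp only [anticontent]
      omega
    · have hd2 := hd ((j:ℤ) - i) hclw hcb.2
      have hbl := black_row H1 H2 H3 H4 H5 H6 H7 i ((j:ℤ) - i) hmb2.1 hmb2.2.1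
        (by omega) (by omega)
      have hwh := white_row H1 H2 H3 H4 H5 H6 H7 i ((j:ℤ) - i) hmb2.1 hmb2.2.1
        (by omega) (by omega)
      rw [hbl] at hd2
      have hcast : ((k' - i : ℕ) : ℤ) = (k' : ℤ) - i := by
        have := hmb2.2.1
        omega
      simp only [anticontent]
      omega
  · intro hD m hm1 hm2
    obtain ⟨i, j, hr, hrc⟩ := cover_content H1 H2 H3 H4 H5 H6 H7 m (by omega) hm2
    have hm0 := m0_mem H1 H2 H3 H4 H5 H6 H7
    have hmin : ∀ c ∈ μ.cells \ lam.cells, content (k', lam.rowLen k') ≤ content c := by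
      intro c hc
      have := content_bds H1 H2 H3 H4 H5 H6 H7 c hc
      simp only [content]
      omega
    have hanti := hD (k', lam.rowLen k') hm0 hmin (i, j) hr
    simp only [anticontent] at hanti
    have hmb2 := (mem_strip H1 H2 H3 H4 H5 H6 H7 i j).mp hr
    have hbl := black_row H1 H2 H3 H4 H5 H6 H7 i m hmb2.1 hmb2.2.1 (by omega) (by omega)
    have hwh := white_row H1 H2 H3 H4 H5 H6 H7 i m hmb2.1 hmb2.2.1 (by omega) (by omega)
    rw [hbl]
    have hcast : ((k' - i : ℕ) : ℤ) = (k' : ℤ) - i := by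
      have := hmb2.2.1
      omega
    omega

lemma ht_black : ht (μ.cells \ lam.cells) = blackCount μ lw lb := by
  rw [ht_eq H1 H2 H3 H4 H5 H6 H7, black_full H1 H2 H3 H4 H5 H6 H7]

lemma wd_white : wd (μ.cells \ lam.cells) = whiteCount μ lw lb := by
  rw [wd_eq H1 H2 H3 H4 H5 H6 H7]
  have hs := white_add_black μ lw lb
  rw [black_full H1 H2 H3 H4 H5 H6 H7] at hs
  have h1 := rowLen_cast lam k'
  have h2 := rowLen_cast μ k
  have h3 : lw < lb := by
    have := H3 k H1
    omega
  have h4 : lw = xseq lam k' := H6.symm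
  have h5 : lb = xseq μ k := H2.symm
  have h6 : xseq μ k' ≤ xseq μ k := (xseq_strictAnti μ).antitone H1
  have h7 := hylt H1 H2 H3 H4 H5 H6 H7 k' H1 le_rfl
  omega

end Main

/-- Let `γ = μ/λ` be the rim hook removed by flipping the wb pair `(lw, lb)` of
`x_μ`. Then `(lw, lb)` is an arrow pair iff `γ ∈ Γ₀`. -/
theorem arrowPair_iff_gammaZero (μ lam : YoungDiagram) (lw lb : ℤ)
    (h : IsFlip μ lam lw lb) :
    ArrowPair μ lw lb ↔ InGammaZero (μ.cells \ lam.cells) := by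
  obtain ⟨hlwlb, hlw, ⟨k, hk⟩, hrange⟩ := h
  -- construct k'
  have hx0 : lb ≤ xseq μ 0 := by
    rw [← hk]
    exact (xseq_strictAnti μ).antitone (Nat.zero_le k)
  have h0 : ∃ j, xseq μ j < lw := by
    refine ⟨(xseq μ 0 - lw + 1).toNat, ?_⟩
    have h1 := strictAnti_le_sub (xseq_strictAnti μ) (xseq μ 0 - lw + 1).toNat
    have h2 : ((xseq μ 0 - lw + 1).toNat : ℤ) = xseq μ 0 - lw + 1 := by omega
    omega
  classical
  set j0 := Nat.find h0 with hj0def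
  have hj0 : xseq μ j0 < lw := Nat.find_spec h0
  have hmin : ∀ j, j < j0 → ¬ xseq μ j < lw := fun j hj => Nat.find_min h0 hj
  have hj0pos : 0 < j0 := by
    rcases Nat.eq_zero_or_pos j0 with h | h
    · exfalso
      rw [h] at hj0
      omega
    · exact h
  set k' := j0 - 1 with hk'def
  have hj0k' : j0 = k' + 1 := by omega
  have H4 : xseq μ (k' + 1) < lw := by rw [← hj0k']; exact hj0
  have H3 : ∀ j, j ≤ k' → lw < xseq μ j := by
    intro j hj
    have h1 : ¬ xseq μ j < lw := hmin j (by omega)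
    have h2 : xseq μ j ≠ lw := fun hc => hlw ⟨j, hc⟩
    omega
  have H1 : k ≤ k' := by
    have hkj0 : k < j0 := by
      rw [hj0def]
      rw [Nat.lt_find_iff]
      intro m hm
      have h1 : xseq μ k ≤ xseq μ m := (xseq_strictAnti μ).antitone hm
      omega
    omega
  -- the new sequence as an explicit function
  set f : ℕ → ℤ := fun i => if i < k then xseq μ i else if i < k' then xseq μ (i+1)
    else if i = k' then lw else xseq μ i with hfdef
  have fval1 : ∀ i, i < k → f i = xseq μ i := fun i hi => if_pos hi
  have fval2 : ∀ i, k ≤ i → i < k' → f i = xseq μ (i+1) := by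
    intro i h1 h2
    show (if i < k then _ else _) = _
    rw [if_neg (by omega), if_pos h2]
  have fval3 : f k' = lw := by
    show (if k' < k then _ else _) = _
    rw [if_neg (by omega), if_neg (by omega), if_pos rfl]
  have fval4 : ∀ i, k' < i → f i = xseq μ i := by
    intro i h1
    show (if i < k then _ else _) = _
    rw [if_neg (by omega), if_neg (by omega), if_neg (by omega)]
  have hfanti : StrictAnti f := by
    apply strictAnti_nat_of_succ_lt
    intro n
    rcases Nat.lt_or_ge (n+1) k with h1 | h1
    · rw [fval1 _ h1, fval1 _ (by omega)]
      exact xseq_strictAnti μ (by omega)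
    rcases Nat.lt_or_ge n k with h2 | h2
    · rw [fval1 _ h2]
      rcases Nat.lt_or_ge (n+1) k' with h3 | h3
      · rw [fval2 _ (by omega) h3]
        exact xseq_strictAnti μ (by omega)
      · have hnk' : n + 1 = k' := by omega
        rw [hnk', fval3]
        have := H3 n (by omega)
        omega
    rcases Nat.lt_or_ge (n+1) k' with h3 | h3
    · rw [fval2 _ h2 (by omega), fval2 _ (by omega) h3]
      exact xseq_strictAnti μ (by omega)
    rcases Nat.lt_or_ge n k' with h4 | h4
    · have hnk' : n + 1 = k' := by omega
      rw [fval2 _ h2 h4, hnk', fval3]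
      have := H3 k' le_rfl
      omega
    rcases Nat.eq_or_lt_of_le h4 with h5 | h5
    · rw [← h5, fval3, fval4 _ (by omega)]
      have h6 : xseq μ (n+1) ≤ xseq μ (k'+1) := (xseq_strictAnti μ).antitone (by omega)
      omega
    · rw [fval4 _ h5, fval4 _ (by omega)]
      exact xseq_strictAnti μ (by omega)
  have hfr : Set.range f = insert lw (Set.range (xseq μ) \ {lb}) := by
    ext n
    simp only [Set.mem_range, Set.mem_insert_iff, Set.mem_diff, Set.mem_singleton_iff]
    constructor
    · rintro ⟨i, rfl⟩
      rcases Nat.lt_or_ge i k with h1 | h1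
      · refine Or.inr ⟨⟨i, (fval1 i h1).symm⟩, ?_⟩
        rw [fval1 i h1, ← hk]
        intro hc
        have := (xseq_strictAnti μ).injective hc
        omega
      rcases Nat.lt_or_ge i k' with h2 | h2
      · refine Or.inr ⟨⟨i+1, (fval2 i h1 h2).symm⟩, ?_⟩
        rw [fval2 i h1 h2, ← hk]
        intro hc
        have := (xseq_strictAnti μ).injective hc
        omega
      rcases Nat.eq_or_lt_of_le h2 with h3 | h3
      · exact Or.inl (by rw [← h3, fval3])
      · refine Or.inr ⟨⟨i, (fval4 i h3).symm⟩, ?_⟩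
        rw [fval4 i h3]
        have h6 : xseq μ i ≤ xseq μ (k'+1) := (xseq_strictAnti μ).antitone (by omega)
        omega
    · rintro (rfl | ⟨⟨j, rfl⟩, hne⟩)
      · exact ⟨k', fval3⟩
      · have hjk : j ≠ k := fun hc => hne (hc ▸ hk)
        rcases Nat.lt_or_ge j k with h1 | h1
        · exact ⟨j, fval1 j h1⟩
        rcases Nat.lt_or_ge k' j with h2 | h2
        · exact ⟨j, fval4 j h2⟩
        · refine ⟨j - 1, ?_⟩
          rw [fval2 (j-1) (by omega) (by omega)]
          congr 1
          omega
  have hfy : xseq lam = f :=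
    strictAnti_eq_of_range_eq (xseq_strictAnti lam) hfanti (by rw [hrange, hfr])
  have H5 : ∀ i, k ≤ i → i < k' → xseq lam i = xseq μ (i+1) := fun i h1 h2 => by
    rw [hfy]; exact fval2 i h1 h2
  have H6 : xseq lam k' = lw := by rw [hfy]; exact fval3
  have H7 : ∀ i, i < k ∨ k' < i → xseq lam i = xseq μ i := by
    rintro i (hi | hi)
    · rw [hfy]; exact fval1 i hi
    · rw [hfy]; exact fval4 i hi
  constructor
  · rintro ⟨_, _, _, hcount, hd⟩
    refine ⟨hook_strip H1 hk H3 H4 H5 H6 H7, ?_, (dcond_iff H1 hk H3 H4 H5 H6 H7).mp hd⟩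
    rw [wd_white H1 hk H3 H4 H5 H6 H7, ht_black H1 hk H3 H4 H5 H6 H7]
    exact hcount
  · rintro ⟨_, hwd, hD⟩
    refine ⟨hlwlb, hlw, ⟨k, hk⟩, ?_, (dcond_iff H1 hk H3 H4 H5 H6 H7).mpr hD⟩
    rw [← wd_white H1 hk H3 H4 H5 H6 H7, ← ht_black H1 hk H3 H4 H5 H6 H7]
    exact hwd
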